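/- arXiv:2004.00858 — 2 statements merged into one kernel-verified Lean document; each statement's English description precedes it below -/
import Mathlib

section
/- Let x : [0,+∞) → ℝⁿ be the solution of the network (NN) with initial point x₀ ∈ X. Then there exists ϱ > 0 such that the energy function E(t) = f(x(t)) + λΘ(x(t),μ(t)) + λϱμ(t) satisfies E'(t) ≤ −(1/γ)‖ẋ(t)‖² for all t > 0; in particular E is nonincreasing on [0,+∞). -/
open Filter Set
open scoped NNReal RealInnerProductSpace

/-- The spare-smoothing kernel θ(s,μ). -/
noncomputable def phi (s μ : ℝ) : ℝ :=
  if s < μ / 3 then 3 / (2 * μ) * s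
  else if s ≤ μ then -(9 / (8 * μ ^ 2)) * (s - μ) ^ 2 + 1
  else 1

/-- ∂θ/∂s(s,μ). -/
noncomputable def phiS (s μ : ℝ) : ℝ :=
  if s < μ / 3 then 3 / (2 * μ)
  else if s ≤ μ then 9 / (4 * μ ^ 2) * (μ - s)
  else 0

/-- ∂θ/∂μ(s,μ) (for s ≥ 0). -/
noncomputable def phiM (s μ : ℝ) : ℝ :=
  if 3 * s < μ then -(3 * s) / (2 * μ ^ 2)
  else if s ≤ μ then -(9 * (μ - s) * s) / (4 * μ ^ 3)
  else 0

/-- Θ(x,μ) = Σ_i θ(x_i,μ). -/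
noncomputable def Phi {n : ℕ} (x : EuclideanSpace ℝ (Fin n)) (μ : ℝ) : ℝ :=
  ∑ i, phi (x i) μ

/-- ∇ₓΘ(x,μ), the gradient of Θ(·,μ). -/
noncomputable def gradPhi {n : ℕ} (x : EuclideanSpace ℝ (Fin n)) (μ : ℝ) :
    EuclideanSpace ℝ (Fin n) := WithLp.toLp 2 (fun i => phiS (x i) μ)

/-- ‖x‖₀, the number of nonzero entries of x. -/
noncomputable def norm0 {n : ℕ} (x : EuclideanSpace ℝ (Fin n)) : ℕ :=
  Nat.card {i // x i ≠ 0}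

/-- μ(t) = (α₀/(t+1)^β + μ*)/2. -/
noncomputable def muFun (α₀ β μs t : ℝ) : ℝ := (α₀ / (t + 1) ^ β + μs) / 2

noncomputable def posSq (t : ℝ) : ℝ := max t 0 ^ 2

lemma posSq_hasDerivAt (a : ℝ) : HasDerivAt posSq (2 * max a 0) a := by
  rcases lt_trichotomy a 0 with h | h | h
  · have hev : posSq =ᶠ[nhds a] (fun _ => (0:ℝ)) :=
      eventually_of_mem (Iio_mem_nhds h) (fun y hy => by
        simp [posSq, max_eq_right (le_of_lt (mem_Iio.mp hy))])
    have := (hasDerivAt_const a (0:ℝ)).congr_of_eventuallyEq hev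
    simpa [max_eq_right h.le] using this
  · subst h
    rw [hasDerivAt_iff_isLittleO]
    have h0 : posSq 0 = 0 := by simp [posSq]
    simp only [h0, max_self, mul_zero, smul_zero, sub_zero]
    simp only [posSq]
    rw [Asymptotics.isLittleO_iff]
    intro c hc
    filter_upwards [eventually_abs_sub_lt 0 hc] with y hy
    simp only [sub_zero] at hy
    have h1 : |max y 0 ^ 2| ≤ |y| * |y| := by
      rcases le_or_gt y 0 with h2 | h2
      · rw [max_eq_right h2]; simpa using mul_nonneg (abs_nonneg y) (abs_nonneg y)
      · rw [max_eq_left h2.le, abs_of_nonneg (sq_nonneg y)]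
        rw [sq]; exact mul_le_mul (le_abs_self y) (le_abs_self y) h2.le (abs_nonneg y)
    calc ‖max y 0 ^ 2‖ ≤ |y| * |y| := h1
      _ ≤ c * ‖y‖ := by
        apply mul_le_mul_of_nonneg_right hy.le (abs_nonneg y)
  · have hev : posSq =ᶠ[nhds a] (fun y => y ^ 2) :=
      eventually_of_mem (Ioi_mem_nhds h) (fun y hy => by
        simp [posSq, max_eq_left (le_of_lt (mem_Ioi.mp hy))])
    have := (hasDerivAt_pow 2 a).congr_of_eventuallyEq hev
    simpa [max_eq_left h.le, mul_comm] using this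

lemma rep_eq (s μ : ℝ) (hμ : 0 < μ) :
    phi s μ = 1 - 9 / 8 * ((posSq (μ - s) - posSq (μ / 3 - s)) / μ ^ 2) := by
  unfold phi posSq
  split_ifs with h1 h2
  · rw [max_eq_left (by linarith), max_eq_left (by linarith)]
    field_simp; ring
  · rw [max_eq_left (by linarith), max_eq_right (by linarith)]
    field_simp; ring
  · push_neg at h2
    rw [max_eq_right (by linarith), max_eq_right (by linarith)]
    simp

lemma phiS_eq (s μ : ℝ) (hμ : 0 < μ) :
    phiS s μ = 9 / (4 * μ ^ 2) * (max (μ - s) 0 - max (μ / 3 - s) 0) := by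
  unfold phiS
  split_ifs with h1 h2
  · rw [max_eq_left (by linarith), max_eq_left (by linarith)]
    field_simp; ring
  · rw [max_eq_left (by linarith), max_eq_right (by linarith)]
    ring
  · push_neg at h2
    rw [max_eq_right (by linarith), max_eq_right (by linarith)]
    ring

noncomputable def Mcoef (s μ : ℝ) : ℝ :=
  9 / 4 * ((posSq (μ - s) - posSq (μ / 3 - s)) / μ ^ 3)
    - 9 / (4 * μ ^ 2) * max (μ - s) 0 + 3 / (4 * μ ^ 2) * max (μ / 3 - s) 0

lemma Mcoef_ge (s μ μs : ℝ) (hs : 0 ≤ s) (hμs : 0 < μs) (hμ : μs / 2 ≤ μ) :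
    -(9 / (2 * μs)) ≤ Mcoef s μ := by
  have hμ0 : 0 < μ := by linarith
  set a := max (μ - s) 0 with ha
  set b := max (μ / 3 - s) 0 with hb
  have hb0 : 0 ≤ b := le_max_right _ _
  have hba : b ≤ a := max_le_max (by linarith) le_rfl
  have haμ : a ≤ μ := max_le (by linarith) hμ0.le
  have ha0 : 0 ≤ a := le_max_right _ _
  have hsq : b ^ 2 ≤ a ^ 2 := pow_le_pow_left₀ hb0 hba 2
  unfold Mcoef posSq
  rw [← ha, ← hb]
  have h1 : 0 ≤ 9 / 4 * ((a ^ 2 - b ^ 2) / μ ^ 3) :=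
    mul_nonneg (by norm_num) (div_nonneg (by linarith) (by positivity))
  have h2 : 0 ≤ 3 / (4 * μ ^ 2) * b := by positivity
  have h3 : 9 / (4 * μ ^ 2) * a ≤ 9 / (2 * μs) := by
    rw [div_mul_eq_mul_div, div_le_div_iff₀ (by positivity) (by positivity)]
    nlinarith [sq_nonneg μ, sq_nonneg (μ - μs/2)]
  linarith

lemma D_identity (s μ s' m' : ℝ) (hμ : 0 < μ) :
    -(9 / 8 * (((2 * max (μ - s) 0 * (m' - s') - 2 * max (μ / 3 - s) 0 * (m' / 3 - s')) * μ ^ 2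
          - (posSq (μ - s) - posSq (μ / 3 - s)) * (2 * μ * m')) / (μ ^ 2) ^ 2))
      = phiS s μ * s' + Mcoef s μ * m' := by
  rw [phiS_eq s μ hμ]
  unfold Mcoef posSq
  have : μ ≠ 0 := hμ.ne'
  field_simp
  ring

set_option maxHeartbeats 1000000 in
theorem stmt7 {n : ℕ}
    (v : EuclideanSpace ℝ (Fin n)) (hv : ∀ i, 0 ≤ v i)
    (X : Set (EuclideanSpace ℝ (Fin n)))
    (hX : X = {x : EuclideanSpace ℝ (Fin n) | ∀ i, 0 ≤ x i ∧ x i ≤ v i})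
    (f : EuclideanSpace ℝ (Fin n) → ℝ)
    (f' : EuclideanSpace ℝ (Fin n) → EuclideanSpace ℝ (Fin n))
    (hf : ∀ y, HasGradientAt f (f' y) y)
    (hconv : ConvexOn ℝ univ f)
    (hlip : LocallyLipschitz f')
    (lam γ α₀ β μs : ℝ)
    (hlam : 0 < lam) (hγ : 0 < γ) (hα₀ : 0 < α₀) (hβ : 0 < β) (hμs : 0 < μs)
    (P : EuclideanSpace ℝ (Fin n) → EuclideanSpace ℝ (Fin n))
    (hP : ∀ z, P z ∈ X ∧ ∀ y ∈ X, ‖z - P z‖ ≤ ‖z - y‖)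
    (x₀ : EuclideanSpace ℝ (Fin n)) (hx₀ : x₀ ∈ X)
    (x x' : ℝ → EuclideanSpace ℝ (Fin n))
    (hx0 : x 0 = x₀)
    (hder : ∀ t ∈ Ici (0 : ℝ), HasDerivWithinAt x (x' t) (Ici 0) t)
    (hode : ∀ t ∈ Ici (0 : ℝ),
      x' t = γ • (P (x t - f' (x t) - lam • gradPhi (x t) (muFun α₀ β μs t)) - x t))
    (hx'c : ContinuousOn x' (Ici 0))
    (hxX : ∀ t ∈ Ici (0 : ℝ), x t ∈ X)
    :
    ∃ ϱ : ℝ, 0 < ϱ ∧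
      (∀ t > (0 : ℝ), ∃ E' : ℝ,
        HasDerivAt
          (fun τ => f (x τ) + lam * Phi (x τ) (muFun α₀ β μs τ) + lam * ϱ * muFun α₀ β μs τ)
          E' t ∧
        E' ≤ -(1 / γ) * ‖x' t‖ ^ 2) ∧
      AntitoneOn
        (fun t => f (x t) + lam * Phi (x t) (muFun α₀ β μs t) + lam * ϱ * muFun α₀ β μs t)
        (Ici 0) := by
  have hXconv : Convex ℝ X := by
    rw [hX]
    intro a ha b hb θ σ hθ hσ hsum i
    have hai := ha i; have hbi := hb i
    have hcoord : (θ • a + σ • b) i = θ * a i + σ * b i := rfl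
    constructor
    · rw [hcoord]; nlinarith [hai.1, hbi.1]
    · rw [hcoord]; nlinarith [hai.2, hbi.2]
  have h9 : (0:ℝ) < 9 / (2 * μs) := by positivity
  set ϱ : ℝ := (n : ℝ) * (9 / (2 * μs)) + 1 with hϱdef
  have hϱpos : 0 < ϱ := by
    have h0 : 0 ≤ (n : ℝ) * (9 / (2 * μs)) := mul_nonneg (Nat.cast_nonneg n) h9.le
    rw [hϱdef]; linarith
  have hμq : ∀ t : ℝ, 0 ≤ t → 0 < muFun α₀ β μs t ∧ μs / 2 ≤ muFun α₀ β μs t := by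
    intro t ht
    have ht1 : (0:ℝ) < t + 1 := by linarith
    have hrp : 0 < (t + 1) ^ β := Real.rpow_pos_of_pos ht1 β
    have h0 : 0 < α₀ / (t + 1) ^ β := div_pos hα₀ hrp
    unfold muFun
    constructor <;> linarith
  set mD : ℝ → ℝ := fun t =>
    (0 * (t + 1) ^ β - α₀ * (β * (t + 1) ^ (β - 1) * 1)) / ((t + 1) ^ β) ^ 2 / 2 with hmDdef
  have hmuD : ∀ t : ℝ, 0 ≤ t → HasDerivAt (muFun α₀ β μs) (mD t) t := by
    intro t ht
    have ht1 : (0:ℝ) < t + 1 := by linarith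
    have hrp : (t + 1) ^ β ≠ 0 := (Real.rpow_pos_of_pos ht1 β).ne'
    have h1 : HasDerivAt (fun τ : ℝ => τ + 1) 1 t := (hasDerivAt_id t).add_const 1
    have h2 : HasDerivAt (fun τ : ℝ => (τ + 1) ^ β) (β * (t + 1) ^ (β - 1) * 1) t :=
      by have := (Real.hasDerivAt_rpow_const (p := β) (Or.inl ht1.ne')).comp t h1; exact this
    exact (((hasDerivAt_const t α₀).div h2 hrp).add_const μs).div_const 2
  have hmDle : ∀ t : ℝ, 0 ≤ t → mD t ≤ 0 := by
    intro t ht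
    have ht1 : (0:ℝ) ≤ t + 1 := by linarith
    have hr : 0 ≤ (t + 1) ^ (β - 1) := Real.rpow_nonneg ht1 _
    have hN : 0 * (t + 1) ^ β - α₀ * (β * (t + 1) ^ (β - 1) * 1) ≤ 0 := by
      nlinarith [mul_nonneg (mul_nonneg hα₀.le hβ.le) hr]
    have hd : (0 * (t + 1) ^ β - α₀ * (β * (t + 1) ^ (β - 1) * 1)) / ((t + 1) ^ β) ^ 2 ≤ 0 :=
      div_nonpos_iff.mpr (Or.inr ⟨hN, sq_nonneg _⟩)
    rw [hmDdef]
    simp only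
    linarith
  have key : ∀ t ∈ Ici (0:ℝ),
      HasDerivWithinAt
        (fun τ => f (x τ) + lam * Phi (x τ) (muFun α₀ β μs τ) + lam * ϱ * muFun α₀ β μs τ)
        (⟪f' (x t) + lam • gradPhi (x t) (muFun α₀ β μs t), x' t⟫
          + lam * ((∑ i, Mcoef (x t i) (muFun α₀ β μs t)) + ϱ) * mD t) (Ici 0) t
      ∧ ⟪f' (x t) + lam • gradPhi (x t) (muFun α₀ β μs t), x' t⟫
          + lam * ((∑ i, Mcoef (x t i) (muFun α₀ β μs t)) + ϱ) * mD t
          ≤ -(1 / γ) * ‖x' t‖ ^ 2 := by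
    intro t ht
    have ht' : (0:ℝ) ≤ t := ht
    obtain ⟨hμpos, hμge⟩ := hμq t ht'
    have hmu := hmuD t ht'
    have hdx := hder t ht
    have hxi : ∀ i, HasDerivWithinAt (fun τ => x τ i) (x' t i) (Ici 0) t := fun i =>
      (EuclideanSpace.proj (𝕜 := ℝ) i).hasFDerivAt.comp_hasDerivWithinAt t hdx
    have hphi : ∀ i : Fin n, HasDerivWithinAt
        (fun τ => phi (x τ i) (muFun α₀ β μs τ))
        (phiS (x t i) (muFun α₀ β μs t) * x' t i + Mcoef (x t i) (muFun α₀ β μs t) * mD t)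
        (Ici 0) t := by
      intro i
      have hA : HasDerivWithinAt (fun τ => posSq (muFun α₀ β μs τ - x τ i))
          (2 * max (muFun α₀ β μs t - x t i) 0 * (mD t - x' t i)) (Ici 0) t :=
        (posSq_hasDerivAt _).comp_hasDerivWithinAt t (hmu.hasDerivWithinAt.sub (hxi i))
      have hB : HasDerivWithinAt (fun τ => posSq (muFun α₀ β μs τ / 3 - x τ i))
          (2 * max (muFun α₀ β μs t / 3 - x t i) 0 * (mD t / 3 - x' t i)) (Ici 0) t :=
        (posSq_hasDerivAt _).comp_hasDerivWithinAt t
          ((hmu.hasDerivWithinAt.div_const 3).sub (hxi i))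
      have hN := hA.sub hB
      have hD2 : HasDerivWithinAt (fun τ => muFun α₀ β μs τ ^ 2)
          (2 * muFun α₀ β μs t * mD t) (Ici 0) t := by
        have h := (hmu.hasDerivWithinAt (s := Ici 0)).pow 2
        norm_num at h
        exact h
      have hQ := hN.div hD2 (pow_ne_zero 2 hμpos.ne')
      have hrep := (hQ.const_mul (9/8 : ℝ)).const_sub 1
      have heqOn : ∀ τ ∈ Ici (0:ℝ),
          phi (x τ i) (muFun α₀ β μs τ)
            = 1 - 9/8 * ((posSq (muFun α₀ β μs τ - x τ i)
                - posSq (muFun α₀ β μs τ / 3 - x τ i)) / muFun α₀ β μs τ ^ 2) :=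
        fun τ hτ => rep_eq _ _ (hμq τ hτ).1
      have hrep' := hrep.congr heqOn (heqOn t ht)
      rw [← D_identity (x t i) (muFun α₀ β μs t) (x' t i) (mD t) hμpos]
      exact hrep'
    have hPhiD : HasDerivWithinAt (fun τ => Phi (x τ) (muFun α₀ β μs τ))
        (∑ i, (phiS (x t i) (muFun α₀ β μs t) * x' t i
          + Mcoef (x t i) (muFun α₀ β μs t) * mD t)) (Ici 0) t := by
      have h := HasDerivWithinAt.fun_sum (u := Finset.univ) (fun i _ => hphi i)
      exact h
    have hfd : HasDerivWithinAt (fun τ => f (x τ)) (⟪f' (x t), x' t⟫) (Ici 0) t := by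
      have h := (hf (x t)).hasFDerivAt.comp_hasDerivWithinAt t hdx
      simp only [InnerProductSpace.toDual_apply_apply] at h
      exact h
    have hE := (hfd.add (hPhiD.const_mul lam)).add (hmu.hasDerivWithinAt.const_mul (lam * ϱ))
    have hginner : ⟪gradPhi (x t) (muFun α₀ β μs t), x' t⟫
        = ∑ i, phiS (x t i) (muFun α₀ β μs t) * x' t i := by
      simp [gradPhi, PiLp.inner_apply, RCLike.inner_apply, conj_trivial]
      exact Finset.sum_congr rfl fun i _ => mul_comm _ _
    have hEderiv : ⟪f' (x t), x' t⟫
          + lam * (∑ i, (phiS (x t i) (muFun α₀ β μs t) * x' t i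
            + Mcoef (x t i) (muFun α₀ β μs t) * mD t))
          + lam * ϱ * mD t
        = ⟪f' (x t) + lam • gradPhi (x t) (muFun α₀ β μs t), x' t⟫
          + lam * ((∑ i, Mcoef (x t i) (muFun α₀ β μs t)) + ϱ) * mD t := by
      rw [inner_add_left, real_inner_smul_left, hginner, Finset.sum_add_distrib,
        ← Finset.sum_mul]
      ring
    constructor
    · rw [← hEderiv]
      exact hE
    -- the bound
    · have hmem := hxX t ht
      rw [hX] at hmem
      obtain ⟨hp1, hp2⟩ := hP (x t - f' (x t) - lam • gradPhi (x t) (muFun α₀ β μs t))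
      set z := x t - f' (x t) - lam • gradPhi (x t) (muFun α₀ β μs t) with hzdef
      set p := P z with hpdef
      haveI : Nonempty X := ⟨⟨p, hp1⟩⟩
      have hbdd : BddBelow (range fun q : X => ‖z - (q : EuclideanSpace ℝ (Fin n))‖) := by
        refine ⟨0, ?_⟩
        rintro r ⟨q, rfl⟩
        exact norm_nonneg _
      have hinf : ‖z - p‖ = ⨅ w : X, ‖z - w‖ := by
        apply le_antisymm
        · exact le_ciInf fun q => hp2 q q.2
        · exact ciInf_le hbdd (⟨p, hp1⟩ : X)
      have hVI := (norm_eq_iInf_iff_real_inner_le_zero hXconv hp1).1 hinf (x t) (hxX t ht)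
      set w := f' (x t) + lam • gradPhi (x t) (muFun α₀ β μs t) with hwdef
      have hz2 : z - p = (x t - p) - w := by
        rw [hzdef, hwdef]; abel
      have h1 : ‖x t - p‖ ^ 2 ≤ ⟪w, x t - p⟫ := by
        rw [hz2, inner_sub_left] at hVI
        have hself : ⟪x t - p, x t - p⟫ = ‖x t - p‖ ^ 2 := real_inner_self_eq_norm_sq _
        linarith
      have hode' := hode t ht
      have hxnorm : ‖x' t‖ ^ 2 = γ ^ 2 * ‖x t - p‖ ^ 2 := by
        rw [hode', norm_smul, norm_sub_rev, mul_pow]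
        congr 1
        rw [Real.norm_eq_abs, abs_of_pos hγ]
      have hwin : ⟪w, x' t⟫ = -γ * ⟪w, x t - p⟫ := by
        rw [hode', real_inner_smul_right, ← neg_sub (x t) p, inner_neg_right]
        ring
      have hb1 : ⟪w, x' t⟫ ≤ -(1 / γ) * ‖x' t‖ ^ 2 := by
        rw [hwin, hxnorm]
        have hh : -(1/γ) * (γ ^ 2 * ‖x t - p‖ ^ 2) = -(γ * ‖x t - p‖ ^ 2) := by
          field_simp
        rw [hh]
        have := mul_le_mul_of_nonneg_left h1 hγ.le
        linarith
      have hMi : ∀ i : Fin n, -(9 / (2 * μs)) ≤ Mcoef (x t i) (muFun α₀ β μs t) :=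
        fun i => Mcoef_ge _ _ _ (hmem i).1 hμs hμge
      have hMsum : -((n : ℝ) * (9 / (2 * μs))) ≤ ∑ i, Mcoef (x t i) (muFun α₀ β μs t) := by
        calc -((n : ℝ) * (9 / (2 * μs))) = ∑ _i : Fin n, -(9 / (2 * μs)) := by
              rw [Finset.sum_const, Finset.card_univ, Fintype.card_fin, nsmul_eq_mul]; ring
          _ ≤ _ := Finset.sum_le_sum (fun i _ => hMi i)
      have hb2 : lam * ((∑ i, Mcoef (x t i) (muFun α₀ β μs t)) + ϱ) * mD t ≤ 0 := by
        have hfac : 0 ≤ (∑ i, Mcoef (x t i) (muFun α₀ β μs t)) + ϱ := by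
          rw [hϱdef]; linarith
        exact mul_nonpos_iff.mpr (Or.inl ⟨mul_nonneg hlam.le hfac, hmDle t ht'⟩)
      have hfin := add_le_add hb1 hb2
      rw [add_zero] at hfin
      exact hfin
  refine ⟨ϱ, hϱpos, ?_, ?_⟩
  · intro t ht
    exact ⟨_, (key t ht.le).1.hasDerivAt (Ici_mem_nhds ht), (key t ht.le).2⟩
  · have hcont : ContinuousOn
        (fun t => f (x t) + lam * Phi (x t) (muFun α₀ β μs t) + lam * ϱ * muFun α₀ β μs t)
        (Ici 0) := fun t ht => ((key t ht).1).continuousWithinAt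
    apply antitoneOn_of_deriv_nonpos (convex_Ici 0) hcont
    · intro t ht
      rw [interior_Ici] at ht
      exact ((key t (mem_Ici.mpr ht.le)).1.hasDerivAt (Ici_mem_nhds ht)).differentiableAt.differentiableWithinAt
    · intro t ht
      rw [interior_Ici] at ht
      have h := key t (mem_Ici.mpr ht.le)
      rw [(h.1.hasDerivAt (Ici_mem_nhds ht)).deriv]
      have hnn : -(1 / γ) * ‖x' t‖ ^ 2 ≤ 0 := by
        have h' : 0 < 1 / γ := by positivity
        nlinarith [sq_nonneg ‖x' t‖]
      exact le_trans h.2 hnn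
end

section
/- Let x : [0,+∞) → ℝⁿ be the solution of the network (NN) with initial point x₀ ∈ X, suppose Assumption 1 holds, let x̄ be an accumulation point of x(·), and set X̄ = {y ∈ X : y_i = 0 for all i ∈ I(x̄) ∪ J(x̄)}. Let x* be a global minimizer of f over X̄ satisfying x* = P_{X̄}(x* − ∇f(x*)). Then x* is a local minimizer of problem (P): minimize f(x) + λ‖x‖₀ over X. Moreover, if J(x̄) ≠ ∅, then ‖x*‖₀ < ‖x̄‖₀ and f(x*) + λ‖x*‖₀ < f(x̄) + λ‖x̄‖₀. -/
open Filter Set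
open scoped NNReal

section aux
open Classical

lemma norm0_eq_card {n : ℕ} (y : EuclideanSpace ℝ (Fin n)) :
    norm0 y = (Finset.univ.filter fun i => y i ≠ 0).card := by
  classical
  rw [norm0, Nat.card_eq_fintype_card]
  convert Fintype.card_subtype (fun i => y i ≠ 0)

lemma norm0_mono {n : ℕ} {a b : EuclideanSpace ℝ (Fin n)}
    (h : ∀ i, a i ≠ 0 → b i ≠ 0) : norm0 a ≤ norm0 b := by
  classical
  rw [norm0_eq_card, norm0_eq_card]
  apply Finset.card_le_card
  intro i hi
  simp only [Finset.mem_filter, Finset.mem_univ, true_and] at *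
  exact h i hi

lemma norm0_lt {n : ℕ} {a b : EuclideanSpace ℝ (Fin n)}
    (h : ∀ i, a i ≠ 0 → b i ≠ 0) (i : Fin n) (hb : b i ≠ 0) (ha : a i = 0) :
    norm0 a < norm0 b := by
  classical
  rw [norm0_eq_card, norm0_eq_card]
  apply Finset.card_lt_card
  rw [Finset.ssubset_iff_of_subset]
  · exact ⟨i, by simpa using hb, by simp [ha]⟩
  · intro j hj
    simp only [Finset.mem_filter, Finset.mem_univ, true_and] at *
    exact h j hj

lemma aux_norm_le {n : ℕ} (w : EuclideanSpace ℝ (Fin n)) (c : ℝ) (hc : 0 ≤ c)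
    (h : ∀ i, |w i| ≤ c) : ‖w‖ ≤ Real.sqrt n * c := by
  rw [EuclideanSpace.norm_eq]
  have h1 : ∑ i, ‖w i‖ ^ 2 ≤ (n : ℝ) * c ^ 2 := by
    calc ∑ i, ‖w i‖ ^ 2 ≤ ∑ _i : Fin n, c ^ 2 := by
          apply Finset.sum_le_sum
          intro i _
          have hi := h i
          rw [Real.norm_eq_abs]
          nlinarith [abs_nonneg (w i)]
      _ = (n : ℝ) * c ^ 2 := by simp [Finset.sum_const]
  calc Real.sqrt (∑ i, ‖w i‖ ^ 2) ≤ Real.sqrt ((n : ℝ) * c ^ 2) := Real.sqrt_le_sqrt h1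
    _ = Real.sqrt n * c := by
        rw [Real.sqrt_mul (by positivity), Real.sqrt_sq hc]

end aux

theorem stmt18 {n : ℕ}
    (v : EuclideanSpace ℝ (Fin n)) (hv : ∀ i, 0 ≤ v i)
    (X : Set (EuclideanSpace ℝ (Fin n)))
    (hX : X = {x : EuclideanSpace ℝ (Fin n) | ∀ i, 0 ≤ x i ∧ x i ≤ v i})
    (f : EuclideanSpace ℝ (Fin n) → ℝ)
    (f' : EuclideanSpace ℝ (Fin n) → EuclideanSpace ℝ (Fin n))
    (hf : ∀ y, HasGradientAt f (f' y) y)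
    (hconv : ConvexOn ℝ univ f)
    (hlip : LocallyLipschitz f')
    (lam γ α₀ β μs : ℝ)
    (hlam : 0 < lam) (hγ : 0 < γ) (hα₀ : 0 < α₀) (hβ : 0 < β) (hμs : 0 < μs)
    (P : EuclideanSpace ℝ (Fin n) → EuclideanSpace ℝ (Fin n))
    (hP : ∀ z, P z ∈ X ∧ ∀ y ∈ X, ‖z - P z‖ ≤ ‖z - y‖)
    (x₀ : EuclideanSpace ℝ (Fin n)) (hx₀ : x₀ ∈ X)
    (x x' : ℝ → EuclideanSpace ℝ (Fin n))
    (hx0 : x 0 = x₀)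
    (hder : ∀ t ∈ Ici (0 : ℝ), HasDerivWithinAt x (x' t) (Ici 0) t)
    (hode : ∀ t ∈ Ici (0 : ℝ),
      x' t = γ • (P (x t - f' (x t) - lam • gradPhi (x t) (muFun α₀ β μs t)) - x t))
    (hx'c : ContinuousOn x' (Ici 0))
    (hxX : ∀ t ∈ Ici (0 : ℝ), x t ∈ X)
    (hn : 0 < n)
    (Lf : ℝ) (hLf0 : 0 < Lf) (hLf : ∀ y ∈ X, ∀ i, |f' y i| ≤ Lf)
    (hA1 : (∀ i, v i ≠ 0 → μs < v i) ∧
      μs < 3 * lam / (2 * ((⨆ i, v i) + Lf)) ∧ μs < 2 * lam / (n * Lf))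
    (xbar : EuclideanSpace ℝ (Fin n))
    (hacc : ∃ u : ℕ → ℝ, Tendsto u atTop atTop ∧ Tendsto (fun k => x (u k)) atTop (nhds xbar))
    (Xbar : Set (EuclideanSpace ℝ (Fin n)))
    (hXbar : Xbar = {y : EuclideanSpace ℝ (Fin n) | y ∈ X ∧
      ∀ i, 0 ≤ xbar i → xbar i < μs / 2 → y i = 0})
    (Pbar : EuclideanSpace ℝ (Fin n) → EuclideanSpace ℝ (Fin n))
    (hPbar : ∀ z, Pbar z ∈ Xbar ∧ ∀ y ∈ Xbar, ‖z - Pbar z‖ ≤ ‖z - y‖)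
    (xstar : EuclideanSpace ℝ (Fin n))
    (hmin : xstar ∈ Xbar ∧ ∀ y ∈ Xbar, f xstar ≤ f y)
    (hfix : xstar = Pbar (xstar - f' xstar)) :
    IsLocalMinOn (fun y => f y + lam * (norm0 y : ℝ)) X xstar ∧
    ({i | μs / 6 ≤ xbar i ∧ xbar i < μs / 2}.Nonempty →
      norm0 xstar < norm0 xbar ∧
      f xstar + lam * (norm0 xstar : ℝ) < f xbar + lam * (norm0 xbar : ℝ)) := by
  classical
  obtain ⟨u, hu, hxu⟩ := hacc
  -- xbar ∈ X
  have hxbarX : xbar ∈ X := by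
    rw [hX]
    intro i
    have hcoord : Tendsto (fun k => x (u k) i) atTop (nhds (xbar i)) :=
      ((EuclideanSpace.proj (𝕜 := ℝ) i).continuous.tendsto xbar).comp hxu
    have hev : ∀ᶠ k in atTop, x (u k) ∈ X :=
      (hu.eventually_ge_atTop 0).mono fun k hk => hxX _ hk
    constructor
    · exact ge_of_tendsto hcoord (hev.mono fun k hk => ((hX ▸ hk) i).1)
    · exact le_of_tendsto hcoord (hev.mono fun k hk => ((hX ▸ hk) i).2)
  have hxbar0 : ∀ i, 0 ≤ xbar i := fun i => ((hX ▸ hxbarX) i).1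
  -- support of xstar
  have hstar0 : ∀ i, xbar i < μs / 2 → xstar i = 0 := by
    intro i hi
    exact (hXbar ▸ hmin.1).2 i (hxbar0 i) hi
  have hstarsupp : ∀ i, xstar i ≠ 0 → μs / 2 ≤ xbar i := by
    intro i hi
    by_contra h
    exact hi (hstar0 i (lt_of_not_ge h))
  -- convexity of X
  have hXconv : Convex ℝ X := by
    rw [hX]
    intro a ha b hb s t hs ht hst
    intro i
    have ha' := ha i
    have hb' := hb i
    have h1 : (s • a + t • b) i = s * a i + t * b i := by
      simp [PiLp.add_apply, PiLp.smul_apply, smul_eq_mul]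
    rw [h1]
    constructor
    · nlinarith [ha'.1, hb'.1]
    · nlinarith [ha'.2, hb'.2]
  -- MVT bound
  have hC : ∀ a ∈ X, ∀ b ∈ X, |f b - f a| ≤ (Real.sqrt n * Lf) * ‖b - a‖ := by
    intro a ha b hb
    have := hXconv.norm_image_sub_le_of_norm_hasFDerivWithin_le
      (f' := fun z => InnerProductSpace.toDual ℝ _ (f' z))
      (fun z _ => (hf z).hasFDerivAt.hasFDerivWithinAt)
      (fun z hz => by
        rw [(InnerProductSpace.toDual ℝ _).norm_map]
        exact aux_norm_le (f' z) Lf hLf0.le (hLf z hz))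
      ha hb
    simpa [Real.norm_eq_abs] using this
  -- the point ybar
  set ybar : EuclideanSpace ℝ (Fin n) :=
    WithLp.toLp 2 (fun i => if xbar i < μs / 2 then 0 else xbar i) with hybar
  have hybar_apply : ∀ i, ybar i = if xbar i < μs / 2 then 0 else xbar i := fun i => rfl
  have hybarX : ybar ∈ X := by
    rw [hX]
    intro i
    rw [hybar_apply]
    split
    · exact ⟨le_refl 0, hv i⟩
    · exact (hX ▸ hxbarX) i
  have hybarXbar : ybar ∈ Xbar := by
    rw [hXbar]
    refine ⟨hybarX, fun i _ hi => ?_⟩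
    rw [hybar_apply, if_pos hi]
  -- distance bound
  have hdiff : ‖ybar - xbar‖ ≤ Real.sqrt n * (μs / 2) := by
    apply aux_norm_le _ _ (by positivity)
    intro i
    have h1 : (ybar - xbar) i = ybar i - xbar i := rfl
    rw [h1, hybar_apply]
    by_cases h : xbar i < μs / 2
    · rw [if_pos h, abs_of_nonpos (by linarith [hxbar0 i])]
      linarith [hxbar0 i]
    · rw [if_neg h, sub_self, abs_zero]
      positivity
  -- key strict bound
  have hnum : (Real.sqrt n * Lf) * (Real.sqrt n * (μs / 2)) < lam := by
    have hsq : Real.sqrt n * Real.sqrt n = (n : ℝ) :=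
      Real.mul_self_sqrt (Nat.cast_nonneg n)
    have hnLf : (0 : ℝ) < (n : ℝ) * Lf := by
      have : (0 : ℝ) < (n : ℝ) := Nat.cast_pos.2 hn
      positivity
    have h4 : μs * ((n : ℝ) * Lf) < 2 * lam := (lt_div_iff₀ hnLf).1 hA1.2.2
    have h5 : Real.sqrt n * Lf * (Real.sqrt n * (μs / 2)) = (n : ℝ) * Lf * μs / 2 := by
      rw [show Real.sqrt (n : ℝ) * Lf * (Real.sqrt (n : ℝ) * (μs / 2))
          = (Real.sqrt (n : ℝ) * Real.sqrt (n : ℝ)) * (Lf * (μs / 2)) by ring, hsq]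
      ring
    rw [h5]
    nlinarith [h4]
  have hkey : f xstar < f xbar + lam := by
    have h1 : f xstar ≤ f ybar := hmin.2 ybar hybarXbar
    have h2 : |f ybar - f xbar| ≤ (Real.sqrt n * Lf) * ‖ybar - xbar‖ :=
      hC xbar hxbarX ybar hybarX
    have h3 : (Real.sqrt n * Lf) * ‖ybar - xbar‖ ≤
        (Real.sqrt n * Lf) * (Real.sqrt n * (μs / 2)) := by
      apply mul_le_mul_of_nonneg_left hdiff
      positivity
    have h4 := abs_le.1 h2
    linarith [h4.2]
  -- Part 1: local minimum
  have hfcont : ContinuousAt f xstar := (hf xstar).differentiableAt.continuousAt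
  have E1 : ∀ᶠ y in nhds xstar, f xstar - lam < f y := by
    have : Ioi (f xstar - lam) ∈ nhds (f xstar) := Ioi_mem_nhds (by linarith)
    exact hfcont this
  have E2 : ∀ᶠ y in nhds xstar, ∀ i, xstar i ≠ 0 → y i ≠ 0 := by
    rw [eventually_all]
    intro i
    by_cases h : xstar i = 0
    · filter_upwards with y hy
      exact absurd h hy
    · have hcont : ContinuousAt (fun y : EuclideanSpace ℝ (Fin n) => y i) xstar :=
        (EuclideanSpace.proj (𝕜 := ℝ) i).continuous.continuousAt
      filter_upwards [hcont.eventually_ne h] with y hy _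
      exact hy
  constructor
  · show ∀ᶠ y in nhdsWithin xstar X, _ ≤ _
    have E3 : ∀ᶠ y in nhdsWithin xstar X, y ∈ X := eventually_mem_nhdsWithin
    refine (((E1.and E2).filter_mono nhdsWithin_le_nhds).mp (E3.mono ?_))
    intro y hyX hy12
    obtain ⟨h1, h2⟩ := hy12
    by_cases hy : y ∈ Xbar
    · have hfle : f xstar ≤ f y := hmin.2 y hy
      have hnle : (norm0 xstar : ℝ) ≤ (norm0 y : ℝ) :=
        Nat.cast_le.2 (norm0_mono h2)
      simp only
      linarith [mul_le_mul_of_nonneg_left hnle hlam.le]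
    · rw [hXbar, Set.mem_setOf_eq] at hy
      push_neg at hy
      obtain ⟨i, hi1, hi2, hi3⟩ := hy hyX
      have hzero : xstar i = 0 := hstar0 i hi2
      have hnlt : norm0 xstar < norm0 y := norm0_lt h2 i hi3 hzero
      have hncast : (norm0 xstar : ℝ) + 1 ≤ (norm0 y : ℝ) := by
        exact_mod_cast Nat.succ_le_of_lt hnlt
      simp only
      linarith [mul_le_mul_of_nonneg_left hncast hlam.le, h1]
  · rintro ⟨i₀, hi₁, hi₂⟩
    have hsub : ∀ i, xstar i ≠ 0 → xbar i ≠ 0 := by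
      intro i hi
      have := hstarsupp i hi
      intro h0
      rw [h0] at this
      linarith
    have hbar_ne : xbar i₀ ≠ 0 := by
      intro h0
      rw [h0] at hi₁
      linarith
    have hstar_z : xstar i₀ = 0 := hstar0 i₀ hi₂
    have hnlt : norm0 xstar < norm0 xbar := norm0_lt hsub i₀ hbar_ne hstar_z
    refine ⟨hnlt, ?_⟩
    have hncast : (norm0 xstar : ℝ) + 1 ≤ (norm0 xbar : ℝ) := by
      exact_mod_cast Nat.succ_le_of_lt hnlt
    linarith [mul_le_mul_of_nonneg_left hncast hlam.le, hkey]
end
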